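/- If sup over x,y in a set M of |φ(x)ᵀφ(y) − k_{γ/2}(x,y)| < ε and |φ(x)ᵀφ(y) + k_{γ/2}(x,y)| ≤ 3 for all x,y ∈ M, then for ρ = (1/N)Σᵢ φ(xᵢ)φ(xᵢ)ᵀ with x₁,…,x_N ∈ M, the estimator f̂_ρ(x) = (1/M_γ) φ(x)ᵀ ρ φ(x) satisfies sup_{x∈M} |f̂_ρ(x) − f̂_γ(x)| < 3Nε/M_γ · (1/N) = 3ε/M_γ, where f̂_γ(x) = (1/(N M_γ)) Σᵢ k_γ(x,xᵢ) and k_γ(x,y) = k_{γ/2}(x,y)². -/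

import Mathlib

open Finset in
theorem dmkde_deterministic_approx (d D N : ℕ) (hN : 0 < N)
    (γ ε : ℝ) (hγ : 0 < γ) (hε : 0 < ε)
    (M : Set (EuclideanSpace ℝ (Fin d)))
    (φ : EuclideanSpace ℝ (Fin d) → (Fin D → ℝ))
    (xs : Fin N → EuclideanSpace ℝ (Fin d)) (hxs : ∀ i, xs i ∈ M)
    (k : EuclideanSpace ℝ (Fin d) → EuclideanSpace ℝ (Fin d) → ℝ)
    (hk : ∀ x y, k x y = Real.exp (-(γ / 2) * ‖x - y‖ ^ 2))
    (Mγ : ℝ) (hMγ : Mγ = (Real.pi / γ) ^ ((d : ℝ) / 2))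
    (happrox : ∀ x ∈ M, ∀ y ∈ M, |dotProduct (φ x) (φ y) - k x y| < ε)
    (hbound : ∀ x ∈ M, ∀ y ∈ M, |dotProduct (φ x) (φ y) + k x y| ≤ 3)
    (ρ : Matrix (Fin D) (Fin D) ℝ)
    (hρ : ρ = (1 / (N : ℝ)) • ∑ i, Matrix.vecMulVec (φ (xs i)) (φ (xs i)))
    (fρ fγ : EuclideanSpace ℝ (Fin d) → ℝ)
    (hfρ : ∀ x, fρ x = (1 / Mγ) * dotProduct (φ x) (ρ.mulVec (φ x)))
    (hfγ : ∀ x, fγ x = (1 / ((N : ℝ) * Mγ)) * ∑ i, (k x (xs i)) ^ 2) :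
    ∀ x ∈ M, |fρ x - fγ x| < 3 * ε / Mγ := by
  intro x hx
  have hMγpos : 0 < Mγ := by
    rw [hMγ]
    exact Real.rpow_pos_of_pos (div_pos Real.pi_pos hγ) _
  have hNpos : (0:ℝ) < N := Nat.cast_pos.mpr hN
  -- compute the quadratic form
  have hquad : dotProduct (φ x) (ρ.mulVec (φ x))
      = (1 / (N : ℝ)) * ∑ i, (dotProduct (φ x) (φ (xs i))) ^ 2 := by
    rw [hρ, Matrix.smul_mulVec, dotProduct_smul]
    simp only [smul_eq_mul]
    congr 1
    have hdist : (∑ i, Matrix.vecMulVec (φ (xs i)) (φ (xs i))).mulVec (φ x)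
        = ∑ i, (Matrix.vecMulVec (φ (xs i)) (φ (xs i))).mulVec (φ x) := by
      ext j
      simp only [Matrix.mulVec, dotProduct, Finset.sum_apply,
        Matrix.sum_apply, Finset.sum_mul]
      rw [Finset.sum_comm]
    have hds : dotProduct (φ x)
        (∑ i, (Matrix.vecMulVec (φ (xs i)) (φ (xs i))).mulVec (φ x))
        = ∑ i, dotProduct (φ x)
          ((Matrix.vecMulVec (φ (xs i)) (φ (xs i))).mulVec (φ x)) := by
      simp only [dotProduct, Finset.sum_apply, Finset.mul_sum]
      rw [Finset.sum_comm]
    rw [hdist, hds]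
    refine Finset.sum_congr rfl fun i _ => ?_
    simp only [dotProduct, Matrix.mulVec, Matrix.vecMulVec_apply,
      Finset.sum_mul, Finset.mul_sum, sq]
    rw [Finset.sum_comm]
    refine Finset.sum_congr rfl fun a _ => Finset.sum_congr rfl fun b _ => ?_
    ring
  have key : fρ x - fγ x
      = (1 / ((N : ℝ) * Mγ)) * ∑ i,
        ((dotProduct (φ x) (φ (xs i))) ^ 2 - (k x (xs i)) ^ 2) := by
    rw [hfρ, hfγ, hquad, Finset.sum_sub_distrib]
    field_simp
  rw [key]
  have hsum : |∑ i, ((dotProduct (φ x) (φ (xs i))) ^ 2 - (k x (xs i)) ^ 2)|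
      < N * (3 * ε) := by
    calc |∑ i, ((dotProduct (φ x) (φ (xs i))) ^ 2 - (k x (xs i)) ^ 2)|
        ≤ ∑ i, |(dotProduct (φ x) (φ (xs i))) ^ 2 - (k x (xs i)) ^ 2| :=
          Finset.abs_sum_le_sum_abs _ _
      _ < ∑ _i : Fin N, 3 * ε := by
          apply Finset.sum_lt_sum_of_nonempty
          · exact Finset.univ_nonempty_iff.mpr ⟨⟨0, hN⟩⟩
          · intro i _
            have h1 := happrox x hx (xs i) (hxs i)
            have h2 := hbound x hx (xs i) (hxs i)
            have : (dotProduct (φ x) (φ (xs i))) ^ 2 - (k x (xs i)) ^ 2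
                = (dotProduct (φ x) (φ (xs i)) - k x (xs i))
                  * (dotProduct (φ x) (φ (xs i)) + k x (xs i)) := by ring
            rw [this, abs_mul]
            calc |dotProduct (φ x) (φ (xs i)) - k x (xs i)|
                  * |dotProduct (φ x) (φ (xs i)) + k x (xs i)|
                ≤ |dotProduct (φ x) (φ (xs i)) - k x (xs i)| * 3 :=
                  mul_le_mul_of_nonneg_left h2 (abs_nonneg _)
              _ < ε * 3 := by
                  apply mul_lt_mul_of_pos_right h1; norm_num
              _ = 3 * ε := by ring
      _ = N * (3 * ε) := by simp [Finset.sum_const, mul_comm]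
  rw [abs_mul, abs_of_pos (by positivity : (0:ℝ) < 1 / ((N:ℝ) * Mγ))]
  have heq : 3 * ε / Mγ = (1 / ((N:ℝ) * Mγ)) * ((N:ℝ) * (3 * ε)) := by
    field_simp
  rw [heq]
  exact mul_lt_mul_of_pos_left hsum (by positivity)
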